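/- Under the setting of the SVRG variance bound (each f_i convex and L-smooth, F = (1/n)∑f_i + r with minimizer x*, i uniform on {1,…,n}, p_i = ∇f_i(x) − ∇f_i(x̃) + ∇f(x̃)): for any real numbers α ≥ β > 0, α · E_i[‖p_i − ∇f(x)‖²] − β · E_i[‖∇f_i(x) − ∇f_i(x̃)‖²] ≤ 4L(α − β)(F(x) − F(x*) + F(x̃) − F(x*)). -/

import Mathlib

open scoped RealInnerProductSpace

section aux

variable {E : Type*} [NormedAddCommGroup E] [InnerProductSpace ℝ E] [CompleteSpace E]

private lemma line_hasDerivAt (f : E → ℝ) {g : E} (x δ : E) (t : ℝ)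
    (hg : HasGradientAt f g (x + t • δ)) :
    HasDerivAt (fun s : ℝ => f (x + s • δ)) ⟪g, δ⟫ t := by
  have hline : HasDerivAt (fun s : ℝ => x + s • δ) δ t := by
    simpa using ((hasDerivAt_id t).smul_const δ).const_add x
  have hf := (hasGradientAt_iff_hasFDerivAt.mp hg).comp_hasDerivAt t hline
  simpa [InnerProductSpace.toDual_apply_apply, Function.comp_def] using hf

private lemma convex_grad_ineq (f : E → ℝ) (hconv : ConvexOn ℝ Set.univ f)
    {x gx : E} (hg : HasGradientAt f gx x) (y : E) :
    f x + ⟪gx, y - x⟫ ≤ f y := by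
  set δ := y - x with hδ
  have hderiv : HasDerivAt (fun s : ℝ => f (x + s • δ)) ⟪gx, δ⟫ 0 := by
    apply line_hasDerivAt
    simpa using hg
  have htend : Filter.Tendsto (slope (fun s : ℝ => f (x + s • δ)) 0)
      (nhdsWithin 0 (Set.Ioi 0)) (nhds ⟪gx, δ⟫) :=
    (hasDerivAt_iff_tendsto_slope.mp hderiv).mono_left
      (nhdsWithin_mono _ (fun t ht => ne_of_gt ht))
  have hbound : ∀ᶠ t in nhdsWithin (0:ℝ) (Set.Ioi 0),
      slope (fun s : ℝ => f (x + s • δ)) 0 t ≤ f y - f x := by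
    filter_upwards [Ioc_mem_nhdsGT_of_mem (Set.mem_Ico.mpr ⟨le_refl (0:ℝ), zero_lt_one⟩)]
      with t ht
    obtain ⟨ht0, ht1⟩ := ht
    have hc := hconv.2 (Set.mem_univ x) (Set.mem_univ y)
      (by linarith : (0:ℝ) ≤ 1 - t) ht0.le (by ring)
    have hpt : (1 - t) • x + t • y = x + t • δ := by rw [hδ]; module
    rw [hpt] at hc
    have hs : slope (fun s : ℝ => f (x + s • δ)) 0 t = (f (x + t • δ) - f x) / t := by
      simp [slope_def_field]
    rw [hs, div_le_iff₀ ht0]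
    simp only [smul_eq_mul] at hc
    nlinarith
  have := le_of_tendsto htend hbound
  linarith

private lemma descent_lemma (f : E → ℝ) (f' : E → E) {L : ℝ} (hL : 0 < L)
    (hgrad : ∀ z, HasGradientAt f (f' z) z)
    (hlip : ∀ z w, ‖f' z - f' w‖ ≤ L * ‖z - w‖) (x y : E) :
    f y ≤ f x + ⟪f' x, y - x⟫ + L / 2 * ‖y - x‖ ^ 2 := by
  set δ := y - x with hδ
  set h : ℝ → ℝ := fun t => f (x + t • δ) - t * ⟪f' x, δ⟫ - t ^ 2 * (L / 2 * ‖δ‖ ^ 2) with hh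
  have hderiv : ∀ t : ℝ, HasDerivAt h
      (⟪f' (x + t • δ), δ⟫ - ⟪f' x, δ⟫ - 2 * t * (L / 2 * ‖δ‖ ^ 2)) t := by
    intro t
    have h1 := line_hasDerivAt f x δ t (hgrad _)
    have h2 : HasDerivAt (fun t : ℝ => t * ⟪f' x, δ⟫) ⟪f' x, δ⟫ t :=
      hasDerivAt_mul_const _
    have h3 : HasDerivAt (fun t : ℝ => t ^ 2 * (L / 2 * ‖δ‖ ^ 2))
        (2 * t * (L / 2 * ‖δ‖ ^ 2)) t := by
      have := (hasDerivAt_pow 2 t).mul_const (L / 2 * ‖δ‖ ^ 2)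
      refine this.congr_deriv ?_
      push_cast
      ring
    exact (h1.sub h2).sub h3
  have hanti : AntitoneOn h (Set.Icc 0 1) := by
    apply antitoneOn_of_deriv_nonpos (convex_Icc 0 1)
    · exact fun t _ => ((hderiv t).differentiableAt).continuousAt.continuousWithinAt
    · exact fun t _ => ((hderiv t).differentiableAt).differentiableWithinAt
    · intro t ht
      rw [interior_Icc] at ht
      rw [(hderiv t).deriv]
      have h1 : ⟪f' (x + t • δ) - f' x, δ⟫ ≤ ‖f' (x + t • δ) - f' x‖ * ‖δ‖ :=
        real_inner_le_norm _ _
      have h2 := hlip (x + t • δ) x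
      have h3 : ‖x + t • δ - x‖ = t * ‖δ‖ := by
        simp [norm_smul, abs_of_pos ht.1]
      rw [h3] at h2
      rw [inner_sub_left] at h1
      nlinarith [norm_nonneg δ, norm_nonneg (f' (x + t • δ) - f' x)]
  have h10 : h 1 ≤ h 0 :=
    hanti (Set.left_mem_Icc.mpr zero_le_one) (Set.right_mem_Icc.mpr zero_le_one) zero_le_one
  have e0 : h 0 = f x := by simp [hh]
  have hy : x + (1:ℝ) • δ = y := by rw [one_smul, hδ]; abel
  have e1 : h 1 = f y - ⟪f' x, δ⟫ - L / 2 * ‖δ‖ ^ 2 := by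
    rw [hh]
    simp only [hy, one_pow]
    ring
  rw [e0, e1] at h10
  linarith

private lemma cocoercive (f : E → ℝ) (f' : E → E) {L : ℝ} (hL : 0 < L)
    (hgrad : ∀ z, HasGradientAt f (f' z) z)
    (hconv : ConvexOn ℝ Set.univ f)
    (hlip : ∀ z w, ‖f' z - f' w‖ ≤ L * ‖z - w‖) (x y : E) :
    ‖f' x - f' y‖ ^ 2 ≤ 2 * L * (f x - f y - ⟪f' y, x - y⟫) := by
  set φ : E → ℝ := fun z => f z - ⟪f' y, z⟫ with hφ
  set φ' : E → E := fun z => f' z - f' y with hφ'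
  have hφgrad : ∀ z, HasGradientAt φ (φ' z) z := by
    intro z
    have h1 := hasGradientAt_iff_hasFDerivAt.mp (hgrad z)
    have h2 : HasFDerivAt (fun w : E => (⟪f' y, w⟫ : ℝ)) (innerSL ℝ (f' y)) z :=
      (innerSL ℝ (f' y)).hasFDerivAt
    have h4 : InnerProductSpace.toDual ℝ E (φ' z) =
        InnerProductSpace.toDual ℝ E (f' z) - innerSL ℝ (f' y) := by
      ext w
      simp [hφ', inner_sub_left]
    rw [hasGradientAt_iff_hasFDerivAt, h4]
    exact h1.sub h2
  have hφconv : ConvexOn ℝ Set.univ φ := by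
    refine ⟨convex_univ, fun u _ v _ a b ha hb hab => ?_⟩
    have h1 := hconv.2 (Set.mem_univ u) (Set.mem_univ v) ha hb hab
    simp only [hφ, smul_eq_mul] at h1 ⊢
    rw [inner_add_right, real_inner_smul_right, real_inner_smul_right]
    linarith
  have hφlip : ∀ z w, ‖φ' z - φ' w‖ ≤ L * ‖z - w‖ := by
    intro z w
    simpa [hφ', sub_sub_sub_cancel_right] using hlip z w
  have key1 : φ y ≤ φ (x - L⁻¹ • φ' x) := by
    have h := convex_grad_ineq φ hφconv (hφgrad y) (x - L⁻¹ • φ' x)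
    have hz : φ' y = 0 := by simp [hφ']
    rw [hz] at h
    simpa using h
  have key2 := descent_lemma φ φ' hL hφgrad hφlip x (x - L⁻¹ • φ' x)
  have e1 : (x - L⁻¹ • φ' x) - x = -(L⁻¹ • φ' x) := by abel
  rw [e1] at key2
  have e2 : ⟪φ' x, -(L⁻¹ • φ' x)⟫ = -(L⁻¹ * ‖φ' x‖ ^ 2) := by
    rw [inner_neg_right, real_inner_smul_right, real_inner_self_eq_norm_sq]
  have e3 : ‖-(L⁻¹ • φ' x)‖ ^ 2 = L⁻¹ ^ 2 * ‖φ' x‖ ^ 2 := by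
    rw [norm_neg, norm_smul, Real.norm_eq_abs, abs_of_pos (inv_pos.mpr hL)]
    ring
  rw [e2, e3] at key2
  have harith : -(L⁻¹ * ‖φ' x‖ ^ 2) + L / 2 * (L⁻¹ ^ 2 * ‖φ' x‖ ^ 2)
      = -(1 / (2 * L)) * ‖φ' x‖ ^ 2 := by
    field_simp
    ring
  have h6 : φ y ≤ φ x - 1 / (2 * L) * ‖φ' x‖ ^ 2 := by
    have := key1.trans key2
    linarith [harith]
  have hφx : φ x - φ y = f x - f y - ⟪f' y, x - y⟫ := by
    simp only [hφ, inner_sub_right]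
    ring
  have hgx : φ' x = f' x - f' y := rfl
  have h7 : ‖φ' x‖ ^ 2 / (2 * L) ≤ φ x - φ y := by
    have e : 1 / (2 * L) * ‖φ' x‖ ^ 2 = ‖φ' x‖ ^ 2 / (2 * L) := by ring
    linarith [e ▸ h6]
  have h8 := (div_le_iff₀ (by positivity : (0:ℝ) < 2 * L)).mp h7
  rw [← hgx, ← hφx]
  linarith [h8]

private lemma opt_ineq {n : ℕ} (hn : 0 < n) {L : ℝ} (hL : 0 < L)
    (f : Fin n → E → ℝ) (f' : Fin n → E → E) (r : E → ℝ)
    (hgrad : ∀ i x, HasGradientAt (f i) (f' i x) x)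
    (hfconv : ∀ i, ConvexOn ℝ Set.univ (f i))
    (hsmooth : ∀ i x y, ‖f' i x - f' i y‖ ≤ L * ‖x - y‖)
    (hrconv : ConvexOn ℝ Set.univ r)
    (F : E → ℝ) (hF : ∀ x, F x = (n : ℝ)⁻¹ * ∑ i, f i x + r x)
    (xstar : E) (hmin : ∀ x, F xstar ≤ F x) (z : E) :
    (n : ℝ)⁻¹ * ∑ i, (f i z - f i xstar - ⟪f' i xstar, z - xstar⟫) ≤ F z - F xstar := by
  have hn' : (0:ℝ) < n := by exact_mod_cast hn
  set δ := z - xstar with hδ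
  have key : ∀ t : ℝ, t ∈ Set.Ioc (0:ℝ) 1 →
      0 ≤ (n : ℝ)⁻¹ * ∑ i, ⟪f' i xstar, δ⟫ + (r z - r xstar) + L * t * ‖δ‖ ^ 2 := by
    rintro t ⟨ht0, ht1⟩
    have hi : ∀ i : Fin n,
        f i (xstar + t • δ) ≤ f i xstar + t * ⟪f' i (xstar + t • δ), δ⟫ := by
      intro i
      have h := convex_grad_ineq (f i) (hfconv i) (hgrad i (xstar + t • δ)) xstar
      have e : (⟪f' i (xstar + t • δ), xstar - (xstar + t • δ)⟫ : ℝ)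
          = -(t * ⟪f' i (xstar + t • δ), δ⟫) := by
        have e' : xstar - (xstar + t • δ) = -(t • δ) := by abel
        rw [e', inner_neg_right, real_inner_smul_right]
      rw [e] at h
      linarith
    have hr : r (xstar + t • δ) ≤ (1 - t) * r xstar + t * r z := by
      have h := hrconv.2 (Set.mem_univ xstar) (Set.mem_univ z)
        (by linarith : (0:ℝ) ≤ 1 - t) ht0.le (by ring)
      have e : (1 - t) • xstar + t • z = xstar + t • δ := by rw [hδ]; module
      rw [e] at h
      simpa using h
    have hFt := hmin (xstar + t • δ)
    rw [hF, hF] at hFt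
    have hsum : ∑ i, f i (xstar + t • δ)
        ≤ ∑ i, f i xstar + t * ∑ i, ⟪f' i (xstar + t • δ), δ⟫ := by
      calc ∑ i, f i (xstar + t • δ)
          ≤ ∑ i, (f i xstar + t * ⟪f' i (xstar + t • δ), δ⟫) :=
            Finset.sum_le_sum fun i _ => hi i
        _ = ∑ i, f i xstar + t * ∑ i, ⟪f' i (xstar + t • δ), δ⟫ := by
            rw [Finset.sum_add_distrib, Finset.mul_sum]
    have hstep : 0 ≤ (n : ℝ)⁻¹ * ∑ i, ⟪f' i (xstar + t • δ), δ⟫ + (r z - r xstar) := by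
      have h1 : (n : ℝ)⁻¹ * ∑ i, f i (xstar + t • δ)
          ≤ (n : ℝ)⁻¹ * ∑ i, f i xstar
            + (n : ℝ)⁻¹ * (t * ∑ i, ⟪f' i (xstar + t • δ), δ⟫) := by
        have := mul_le_mul_of_nonneg_left hsum (by positivity : (0:ℝ) ≤ (n : ℝ)⁻¹)
        linarith [mul_add ((n : ℝ)⁻¹) (∑ i, f i xstar) (t * ∑ i, ⟪f' i (xstar + t • δ), δ⟫)]
      have h2 : 0 ≤ t * ((n : ℝ)⁻¹ * ∑ i, ⟪f' i (xstar + t • δ), δ⟫ + (r z - r xstar)) := by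
        nlinarith
      nlinarith
    have hib : ∀ i : Fin n,
        ⟪f' i (xstar + t • δ), δ⟫ ≤ ⟪f' i xstar, δ⟫ + L * t * ‖δ‖ ^ 2 := by
      intro i
      have h1 : ⟪f' i (xstar + t • δ) - f' i xstar, δ⟫
          ≤ ‖f' i (xstar + t • δ) - f' i xstar‖ * ‖δ‖ := real_inner_le_norm _ _
      have h2 := hsmooth i (xstar + t • δ) xstar
      have h3 : ‖xstar + t • δ - xstar‖ = t * ‖δ‖ := by
        simp [norm_smul, abs_of_pos ht0]
      rw [h3] at h2
      rw [inner_sub_left] at h1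
      nlinarith [norm_nonneg δ, norm_nonneg (f' i (xstar + t • δ) - f' i xstar)]
    have hsum2 : ∑ i, ⟪f' i (xstar + t • δ), δ⟫
        ≤ ∑ i, ⟪f' i xstar, δ⟫ + (n : ℝ) * (L * t * ‖δ‖ ^ 2) := by
      calc ∑ i, ⟪f' i (xstar + t • δ), δ⟫
          ≤ ∑ i, (⟪f' i xstar, δ⟫ + L * t * ‖δ‖ ^ 2) := Finset.sum_le_sum fun i _ => hib i
        _ = ∑ i, ⟪f' i xstar, δ⟫ + (n : ℝ) * (L * t * ‖δ‖ ^ 2) := by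
            rw [Finset.sum_add_distrib, Finset.sum_const, Finset.card_univ,
              Fintype.card_fin, nsmul_eq_mul]
    have h3 : (n : ℝ)⁻¹ * ∑ i, ⟪f' i (xstar + t • δ), δ⟫
        ≤ (n : ℝ)⁻¹ * ∑ i, ⟪f' i xstar, δ⟫ + L * t * ‖δ‖ ^ 2 := by
      have := mul_le_mul_of_nonneg_left hsum2 (by positivity : (0:ℝ) ≤ (n : ℝ)⁻¹)
      have hc : (n : ℝ)⁻¹ * ((n : ℝ) * (L * t * ‖δ‖ ^ 2)) = L * t * ‖δ‖ ^ 2 := by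
        rw [← mul_assoc, inv_mul_cancel₀ (ne_of_gt hn'), one_mul]
      nlinarith [mul_add ((n : ℝ)⁻¹) (∑ i, ⟪f' i xstar, δ⟫) ((n : ℝ) * (L * t * ‖δ‖ ^ 2))]
    linarith
  have hc : 0 ≤ (n : ℝ)⁻¹ * ∑ i, ⟪f' i xstar, δ⟫ + (r z - r xstar) := by
    by_contra hcon
    push_neg at hcon
    set c := (n : ℝ)⁻¹ * ∑ i, ⟪f' i xstar, δ⟫ + (r z - r xstar) with hcdef
    have hd : (0:ℝ) < L * ‖δ‖ ^ 2 + 1 := by positivity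
    set t := min 1 (-c / (2 * (L * ‖δ‖ ^ 2 + 1))) with htdef
    have ht0 : 0 < t := lt_min zero_lt_one (div_pos (by linarith) (by positivity))
    have := key t ⟨ht0, min_le_left _ _⟩
    have ht2 : t ≤ -c / (2 * (L * ‖δ‖ ^ 2 + 1)) := min_le_right _ _
    rw [le_div_iff₀ (by positivity)] at ht2
    nlinarith [ht0.le, norm_nonneg δ, sq_nonneg ‖δ‖]
  rw [hF z, hF xstar]
  have e : ∑ i, (f i z - f i xstar - ⟪f' i xstar, z - xstar⟫)
      = ∑ i, f i z - ∑ i, f i xstar - ∑ i, ⟪f' i xstar, z - xstar⟫ := by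
    rw [Finset.sum_sub_distrib, Finset.sum_sub_distrib]
  rw [e]
  have e2 : (n : ℝ)⁻¹ * (∑ i, f i z - ∑ i, f i xstar - ∑ i, ⟪f' i xstar, z - xstar⟫)
      = (n : ℝ)⁻¹ * ∑ i, f i z - (n : ℝ)⁻¹ * ∑ i, f i xstar
        - (n : ℝ)⁻¹ * ∑ i, ⟪f' i xstar, z - xstar⟫ := by ring
  rw [e2]
  have hδe : δ = z - xstar := hδ
  rw [← hδe]
  linarith

end aux

theorem svrg_weighted_variance_bound {d n : ℕ} (hn : 0 < n) (L : ℝ) (hL : 0 < L)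
    (f : Fin n → EuclideanSpace ℝ (Fin d) → ℝ)
    (f' : Fin n → EuclideanSpace ℝ (Fin d) → EuclideanSpace ℝ (Fin d))
    (r : EuclideanSpace ℝ (Fin d) → ℝ)
    (hgrad : ∀ i x, HasGradientAt (f i) (f' i x) x)
    (hfconv : ∀ i, ConvexOn ℝ Set.univ (f i))
    (hsmooth : ∀ i x y, ‖f' i x - f' i y‖ ≤ L * ‖x - y‖)
    (hrconv : ConvexOn ℝ Set.univ r)
    (F : EuclideanSpace ℝ (Fin d) → ℝ)
    (hF : ∀ x, F x = (n : ℝ)⁻¹ * ∑ i, f i x + r x)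
    (xstar : EuclideanSpace ℝ (Fin d)) (hmin : ∀ x, F xstar ≤ F x)
    (x xt : EuclideanSpace ℝ (Fin d))
    (gradf : EuclideanSpace ℝ (Fin d) → EuclideanSpace ℝ (Fin d))
    (hgradf : ∀ z, gradf z = (n : ℝ)⁻¹ • ∑ j, f' j z)
    (p : Fin n → EuclideanSpace ℝ (Fin d))
    (hp : ∀ i, p i = f' i x - f' i xt + gradf xt)
    (α β : ℝ) (hβ : 0 < β) (hαβ : β ≤ α) :
    α * ((n : ℝ)⁻¹ * ∑ i, ‖p i - gradf x‖ ^ 2) -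
      β * ((n : ℝ)⁻¹ * ∑ i, ‖f' i x - f' i xt‖ ^ 2) ≤
      4 * L * (α - β) * (F x - F xstar + F xt - F xstar) := by
  have hn' : (0:ℝ) < n := by exact_mod_cast hn
  -- Step A : variance reduction, E‖p - ∇f‖² ≤ E‖∇f_i(x) - ∇f_i(x̃)‖²
  have hg : gradf x - gradf xt = (n : ℝ)⁻¹ • ∑ j, (f' j x - f' j xt) := by
    rw [hgradf, hgradf, ← smul_sub, ← Finset.sum_sub_distrib]
  have hpg : ∀ i, p i - gradf x = (f' i x - f' i xt) - (gradf x - gradf xt) := by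
    intro i
    rw [hp i]
    abel
  have hsum_eq : ∑ j, (f' j x - f' j xt) = (n : ℝ) • (gradf x - gradf xt) := by
    rw [hg, smul_smul, mul_inv_cancel₀ (ne_of_gt hn'), one_smul]
  have stepA : ∑ i, ‖p i - gradf x‖ ^ 2 ≤ ∑ i, ‖f' i x - f' i xt‖ ^ 2 := by
    set g := gradf x - gradf xt with hgdef
    have e2 : ∑ i, ⟪f' i x - f' i xt, g⟫ = (n : ℝ) * ‖g‖ ^ 2 := by
      rw [← sum_inner, hsum_eq, real_inner_smul_left, real_inner_self_eq_norm_sq]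
    have expand : ∑ i, ‖p i - gradf x‖ ^ 2
        = ∑ i, ‖f' i x - f' i xt‖ ^ 2 - (n : ℝ) * ‖g‖ ^ 2 := by
      have e1 : ∀ i : Fin n, ‖p i - gradf x‖ ^ 2
          = ‖f' i x - f' i xt‖ ^ 2 - 2 * ⟪f' i x - f' i xt, g⟫ + ‖g‖ ^ 2 := by
        intro i
        rw [hpg i, norm_sub_sq_real]
      rw [Finset.sum_congr rfl (fun i _ => e1 i), Finset.sum_add_distrib,
        Finset.sum_sub_distrib, ← Finset.mul_sum, e2, Finset.sum_const,
        Finset.card_univ, Fintype.card_fin, nsmul_eq_mul]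
      ring
    rw [expand]
    nlinarith [sq_nonneg ‖g‖, hn']
  -- Step C : bound on E‖∇f_i(x) - ∇f_i(x̃)‖²
  have cocoI : ∀ i (z w : EuclideanSpace ℝ (Fin d)),
      ‖f' i z - f' i w‖ ^ 2 ≤ 2 * L * (f i z - f i w - ⟪f' i w, z - w⟫) :=
    fun i z w => cocoercive (f i) (f' i) hL (hgrad i) (hfconv i) (hsmooth i) z w
  have hquad : ∀ i : Fin n, ‖f' i x - f' i xt‖ ^ 2
      ≤ 4 * L * (f i x - f i xstar - ⟪f' i xstar, x - xstar⟫)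
        + 4 * L * (f i xt - f i xstar - ⟪f' i xstar, xt - xstar⟫) := by
    intro i
    have h1 := cocoI i x xstar
    have h2 := cocoI i xt xstar
    have h3 : f' i x - f' i xt = (f' i x - f' i xstar) - (f' i xt - f' i xstar) := by abel
    have h4 : ‖(f' i x - f' i xstar) - (f' i xt - f' i xstar)‖ ^ 2
        ≤ 2 * ‖f' i x - f' i xstar‖ ^ 2 + 2 * ‖f' i xt - f' i xstar‖ ^ 2 := by
      have ht := norm_sub_le (f' i x - f' i xstar) (f' i xt - f' i xstar)
      nlinarith [norm_nonneg ((f' i x - f' i xstar) - (f' i xt - f' i xstar)),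
        norm_nonneg (f' i x - f' i xstar), norm_nonneg (f' i xt - f' i xstar),
        sq_nonneg (‖f' i x - f' i xstar‖ - ‖f' i xt - f' i xstar‖)]
    rw [h3]
    linarith
  have hAx := opt_ineq hn hL f f' r hgrad hfconv hsmooth hrconv F hF xstar hmin x
  have hAxt := opt_ineq hn hL f f' r hgrad hfconv hsmooth hrconv F hF xstar hmin xt
  have h5 : ∑ i, ‖f' i x - f' i xt‖ ^ 2
      ≤ 4 * L * ∑ i, (f i x - f i xstar - ⟪f' i xstar, x - xstar⟫)
        + 4 * L * ∑ i, (f i xt - f i xstar - ⟪f' i xstar, xt - xstar⟫) := by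
    calc ∑ i, ‖f' i x - f' i xt‖ ^ 2
        ≤ ∑ i, (4 * L * (f i x - f i xstar - ⟪f' i xstar, x - xstar⟫)
          + 4 * L * (f i xt - f i xstar - ⟪f' i xstar, xt - xstar⟫)) :=
          Finset.sum_le_sum fun i _ => hquad i
      _ = _ := by rw [Finset.sum_add_distrib, ← Finset.mul_sum, ← Finset.mul_sum]
  have hsum2 : (n : ℝ)⁻¹ * ∑ i, ‖f' i x - f' i xt‖ ^ 2
      ≤ 4 * L * ((F x - F xstar) + (F xt - F xstar)) := by
    have hninv : (0:ℝ) ≤ (n : ℝ)⁻¹ := by positivity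
    have h6 := mul_le_mul_of_nonneg_left h5 hninv
    have h7 : (n : ℝ)⁻¹ * (4 * L * ∑ i, (f i x - f i xstar - ⟪f' i xstar, x - xstar⟫)
        + 4 * L * ∑ i, (f i xt - f i xstar - ⟪f' i xstar, xt - xstar⟫))
        = 4 * L * ((n : ℝ)⁻¹ * ∑ i, (f i x - f i xstar - ⟪f' i xstar, x - xstar⟫))
          + 4 * L * ((n : ℝ)⁻¹ * ∑ i, (f i xt - f i xstar - ⟪f' i xstar, xt - xstar⟫)) := by
      ring
    rw [h7] at h6
    have h8 : 4 * L * ((n : ℝ)⁻¹ * ∑ i, (f i x - f i xstar - ⟪f' i xstar, x - xstar⟫))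
        ≤ 4 * L * (F x - F xstar) :=
      mul_le_mul_of_nonneg_left hAx (by positivity)
    have h9 : 4 * L * ((n : ℝ)⁻¹ * ∑ i, (f i xt - f i xstar - ⟪f' i xstar, xt - xstar⟫))
        ≤ 4 * L * (F xt - F xstar) :=
      mul_le_mul_of_nonneg_left hAxt (by positivity)
    linarith
  -- Final assembly
  have hA2 : (n : ℝ)⁻¹ * ∑ i, ‖p i - gradf x‖ ^ 2
      ≤ (n : ℝ)⁻¹ * ∑ i, ‖f' i x - f' i xt‖ ^ 2 :=
    mul_le_mul_of_nonneg_left stepA (by positivity)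
  have hα : 0 ≤ α := le_trans hβ.le hαβ
  have hm1 : α * ((n : ℝ)⁻¹ * ∑ i, ‖p i - gradf x‖ ^ 2)
      ≤ α * ((n : ℝ)⁻¹ * ∑ i, ‖f' i x - f' i xt‖ ^ 2) :=
    mul_le_mul_of_nonneg_left hA2 hα
  have hm2 : (α - β) * ((n : ℝ)⁻¹ * ∑ i, ‖f' i x - f' i xt‖ ^ 2)
      ≤ (α - β) * (4 * L * ((F x - F xstar) + (F xt - F xstar))) :=
    mul_le_mul_of_nonneg_left hsum2 (by linarith)
  nlinarith [hm1, hm2]
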